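/- Let N ≥ 1, T > 0, and f ∈ C([0,T], C_{b,u}(ℝ^N)). Define v(t) = ∫₀ᵗ K(t-s,·) ⋆ f(s) ds for 0 < t ≤ T and v(0) = 0. Then for every γ ∈ (0,1) the map v : [0,T] → C_{b,u}(ℝ^N) is Hölder continuous with exponent γ: there is a constant C = C(N, γ, T, sup_{0≤s≤T} ‖f(s)‖_{L^∞}) such that ‖v(t) − v(s)‖_{L^∞} ≤ C|t − s|^γ for all s, t ∈ [0,T]. -/

import Mathlib

open MeasureTheory Real Set Filter ENNReal

/-- The Gaussian heat kernel `K(t,x) = (4πt)^{-N/2} exp(-|x|²/(4t))` on `ℝ^N`. -/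
noncomputable def gaussK (N : ℕ) (t : ℝ) (x : EuclideanSpace ℝ (Fin N)) : ℝ :=
  (4 * π * t) ^ (-(N : ℝ) / 2) * Real.exp (-‖x‖ ^ 2 / (4 * t))

/-- The Duhamel term `v(t,x) = ∫₀ᵗ ∫ K(t-s, x-y) f(s,y) dy ds` (with `v(0,·) = 0`). -/
noncomputable def duhamel (N : ℕ) (f : ℝ → EuclideanSpace ℝ (Fin N) → ℝ) (t : ℝ)
    (x : EuclideanSpace ℝ (Fin N)) : ℝ :=
  ∫ s in Ioo (0 : ℝ) t, ∫ y, gaussK N (t - s) (x - y) * f s y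

section helpers
variable {N : ℕ}
local notation "E" => EuclideanSpace ℝ (Fin N)

lemma integrable_exp_norm {b : ℝ} (hb : 0 < b) :
    Integrable (fun v : E => rexp (-(b * ‖v‖ ^ 2))) := by
  have h := (GaussianFourier.integrable_cexp_neg_mul_sq_norm_add
    (V := E) (b := (b : ℂ)) (by simpa using hb) 0 0).norm
  refine h.congr (Filter.Eventually.of_forall fun v => ?_)
  simp [Complex.norm_exp]
  exact Or.inl (by norm_cast)

lemma integral_exp_norm {b : ℝ} (hb : 0 < b) :
    ∫ v : E, rexp (-(b * ‖v‖ ^ 2)) = (π / b) ^ ((N : ℝ) / 2) := by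
  have h := GaussianFourier.integral_rexp_neg_mul_sq_norm (V := E) hb
  simpa [finrank_euclideanSpace_fin] using h

end helpers

section helpers2
variable {N : ℕ}
local notation "E" => EuclideanSpace ℝ (Fin N)

lemma gaussK_eq {t : ℝ} (ht : 0 < t) (x : E) :
    gaussK N t x = (4 * π * t) ^ (-(N : ℝ) / 2) * rexp (-(1 / (4 * t) * ‖x‖ ^ 2)) := by
  rw [gaussK]
  congr 1
  congr 1
  field_simp

lemma gaussK_nonneg {t : ℝ} (ht : 0 < t) (x : E) : 0 ≤ gaussK N t x := by
  have h4 : (0:ℝ) < 4 * π * t := by positivity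
  unfold gaussK; positivity

lemma integrable_gaussK {t : ℝ} (ht : 0 < t) :
    Integrable (gaussK N t) := by
  have hb : (0:ℝ) < 1 / (4 * t) := by positivity
  have := (integrable_exp_norm (N := N) hb).const_mul ((4 * π * t) ^ (-(N : ℝ) / 2))
  exact this.congr (Filter.Eventually.of_forall fun x => (gaussK_eq ht x).symm)

lemma integral_gaussK {t : ℝ} (ht : 0 < t) :
    ∫ x : E, gaussK N t x = 1 := by
  have hb : (0:ℝ) < 1 / (4 * t) := by positivity
  have h4 : (0:ℝ) < 4 * π * t := by positivity
  calc ∫ x : E, gaussK N t x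
      = (4 * π * t) ^ (-(N : ℝ) / 2) * ∫ x : E, rexp (-(1 / (4 * t) * ‖x‖ ^ 2)) := by
        rw [← integral_const_mul]
        exact integral_congr_ae (Filter.Eventually.of_forall fun x => gaussK_eq ht x)
    _ = (4 * π * t) ^ (-(N : ℝ) / 2) * (4 * π * t) ^ ((N : ℝ) / 2) := by
        rw [integral_exp_norm hb]
        congr 2
        field_simp
    _ = 1 := by
        rw [← Real.rpow_add h4]
        rw [show -(N:ℝ)/2 + (N:ℝ)/2 = 0 by ring, Real.rpow_zero]

end helpers2

noncomputable def gaussD (N : ℕ) (b : ℝ) (z : EuclideanSpace ℝ (Fin N)) : ℝ :=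
  (4 * π * b) ^ (-(N : ℝ) / 2) * ((N / (2 * b)) + 4 / b) * rexp (-(1 / (16 * b) * ‖z‖ ^ 2))

section helpers3
variable {N : ℕ}
local notation "E" => EuclideanSpace ℝ (Fin N)

lemma integrable_gaussD {b : ℝ} (hb : 0 < b) : Integrable (gaussD N b) :=
  (integrable_exp_norm (N := N) (b := 1 / (16 * b)) (by positivity)).const_mul _

lemma integral_gaussD {b : ℝ} (hb : 0 < b) :
    ∫ z : E, gaussD N b z = 4 ^ ((N : ℝ) / 2) * ((N / (2 * b)) + 4 / b) := by
  have h4 : (0:ℝ) < 4 * π * b := by positivity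
  unfold gaussD
  rw [integral_const_mul, integral_exp_norm (by positivity)]
  have : (π / (1 / (16 * b)) : ℝ) = 4 * (4 * π * b) := by field_simp; ring
  rw [this, Real.mul_rpow (by norm_num) h4.le]
  rw [show ((4 * π * b) ^ (-(N : ℝ) / 2) * (↑N / (2 * b) + 4 / b) *
      (4 ^ ((N:ℝ) / 2) * (4 * π * b) ^ ((N:ℝ) / 2)) : ℝ)
    = ((4 * π * b) ^ (-(N : ℝ) / 2) * (4 * π * b) ^ ((N:ℝ) / 2)) *
      (4 ^ ((N:ℝ) / 2) * (↑N / (2 * b) + 4 / b)) from by ring]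
  rw [← Real.rpow_add h4, show -(N:ℝ)/2 + (N:ℝ)/2 = 0 by ring, Real.rpow_zero, one_mul]

lemma hasDerivAt_gaussK {τ : ℝ} (hτ : 0 < τ) (z : E) :
    HasDerivAt (fun u => gaussK N u z)
      (gaussK N τ z * (‖z‖ ^ 2 / (4 * τ ^ 2) - N / (2 * τ))) τ := by
  have h4 : (0:ℝ) < 4 * π * τ := by positivity
  have h1 : HasDerivAt (fun u : ℝ => 4 * π * u) (4 * π) τ := by
    simpa using (hasDerivAt_id τ).const_mul (4 * π)
  have h2 : HasDerivAt (fun u : ℝ => (4 * π * u) ^ (-(N:ℝ)/2))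
      ((-(N:ℝ)/2 * (4 * π * τ) ^ (-(N:ℝ)/2 - 1)) * (4 * π)) τ :=
    (Real.hasDerivAt_rpow_const (Or.inl h4.ne')).comp τ h1
  have h3 : HasDerivAt (fun u : ℝ => -‖z‖ ^ 2 / (4 * u)) (‖z‖ ^ 2 / (4 * τ ^ 2)) τ := by
    have h := (hasDerivAt_inv hτ.ne').const_mul (-‖z‖ ^ 2 / 4)
    have e1 : (fun u : ℝ => -‖z‖ ^ 2 / (4 * u)) = fun y : ℝ => -‖z‖ ^ 2 / 4 * y⁻¹ := by
      funext y; ring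
    rw [e1, show (‖z‖ ^ 2 / (4 * τ ^ 2) : ℝ) = -‖z‖ ^ 2 / 4 * -(τ ^ 2)⁻¹ from by ring]
    exact h
  have h5 : HasDerivAt (fun u : ℝ => rexp (-‖z‖ ^ 2 / (4 * u)))
      (rexp (-‖z‖ ^ 2 / (4 * τ)) * (‖z‖ ^ 2 / (4 * τ ^ 2))) τ := h3.exp
  have h6 := h2.mul h5
  convert h6 using 1
  · rfl
  · rfl
  · rfl
  unfold gaussK
  rw [Real.rpow_sub h4, Real.rpow_one]
  field_simp
  ring

lemma gaussD_spec {b τ : ℝ} (hb : 0 < b) (hbτ : b ≤ τ) (hτ2 : τ ≤ 2 * b) (z : E) :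
    |gaussK N τ z * (‖z‖ ^ 2 / (4 * τ ^ 2) - N / (2 * τ))| ≤ gaussD N b z := by
  have hτ : 0 < τ := lt_of_lt_of_le hb hbτ
  set u := ‖z‖ ^ 2 with hu
  have hu0 : (0:ℝ) ≤ u := by positivity
  set X := rexp (-(1 / (16 * b) * u)) with hX
  have hX0 : 0 < X := Real.exp_pos _
  have hX1 : X ≤ 1 := Real.exp_le_one_iff.2 (neg_nonpos.2 (by positivity))
  have hXu : u * X ≤ 16 * b := by
    have hv : u / (16 * b) ≤ rexp (u / (16 * b)) :=
      (Real.add_one_le_exp _).trans' (by linarith)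
    have h' : u ≤ rexp (u / (16 * b)) * (16 * b) := (div_le_iff₀ (by positivity)).1 hv
    have e : X = (rexp (u / (16 * b)))⁻¹ := by
      rw [hX, ← Real.exp_neg]; congr 1; field_simp
    rw [e, mul_inv_le_iff₀ (Real.exp_pos _)]
    nlinarith
  set P : ℝ := (4 * π * b) ^ (-(N:ℝ)/2) with hP
  have hP0 : 0 < P := Real.rpow_pos_of_pos (by positivity) _
  have hKle : gaussK N τ z ≤ P * (X * X) := by
    have hA : (4 * π * τ:ℝ) ^ (-(N:ℝ)/2) ≤ P := by
      apply Real.rpow_le_rpow_of_nonpos (by positivity) (by nlinarith [pi_pos])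
      rw [neg_div]
      exact neg_nonpos.2 (by positivity)
    have key : u / (8 * b) ≤ u / (4 * τ) := by
      rw [div_le_div_iff₀ (by positivity) (by positivity)]
      nlinarith
    have hB : rexp (-u / (4 * τ)) ≤ X * X := by
      rw [hX, ← Real.exp_add]
      apply Real.exp_le_exp.2
      rw [show (-(1/(16*b)*u) + -(1/(16*b)*u) : ℝ) = -(u/(8*b)) from by ring,
        show (-u/(4*τ) : ℝ) = -(u/(4*τ)) from by ring]
      exact neg_le_neg key
    exact mul_le_mul hA hB (Real.exp_pos _).le hP0.le
  have habs : |gaussK N τ z * (u / (4 * τ ^ 2) - (N:ℝ) / (2 * τ))|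
      ≤ gaussK N τ z * (u / (4 * τ ^ 2) + (N:ℝ) / (2 * τ)) := by
    rw [abs_mul, abs_of_nonneg (gaussK_nonneg hτ z)]
    apply mul_le_mul_of_nonneg_left _ (gaussK_nonneg hτ z)
    have p1 : (0:ℝ) ≤ u / (4 * τ ^ 2) := by positivity
    have p2 : (0:ℝ) ≤ (N:ℝ) / (2 * τ) := by positivity
    exact abs_le.2 ⟨by linarith, by linarith⟩
  have c1 : u / (4 * τ ^ 2) ≤ u / (4 * b ^ 2) := by
    rw [div_le_div_iff₀ (by positivity) (by positivity)]
    nlinarith [mul_le_mul_of_nonneg_left (show b ^ 2 ≤ τ ^ 2 by nlinarith) hu0]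
  have c2 : (N:ℝ) / (2 * τ) ≤ (N:ℝ) / (2 * b) := by
    rw [div_le_div_iff₀ (by positivity) (by positivity)]
    have : (0:ℝ) ≤ (N:ℝ) := Nat.cast_nonneg N
    nlinarith
  calc |gaussK N τ z * (u / (4 * τ ^ 2) - (N:ℝ) / (2 * τ))|
      ≤ gaussK N τ z * (u / (4 * τ ^ 2) + (N:ℝ) / (2 * τ)) := habs
    _ ≤ (P * (X * X)) * (u / (4 * b ^ 2) + (N:ℝ) / (2 * b)) := by
        apply mul_le_mul hKle (by linarith) (by positivity) (by positivity)
    _ = P * X * (X * (u / (4 * b ^ 2)) + X * ((N:ℝ) / (2 * b))) := by ring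
    _ ≤ P * X * (4 / b + (N:ℝ) / (2 * b)) := by
        apply mul_le_mul_of_nonneg_left _ (by positivity)
        apply add_le_add
        · calc X * (u / (4 * b ^ 2)) = (u * X) / (4 * b ^ 2) := by ring
            _ ≤ (16 * b) / (4 * b ^ 2) := by gcongr
            _ = 4 / b := by field_simp; ring
        · exact mul_le_of_le_one_left (by positivity) hX1
    _ = gaussD N b z := by simp only [gaussD, hP, hX, hu]; ring

lemma gaussK_sub_abs_le {b a : ℝ} (hb : 0 < b) (hba : b ≤ a) (h2 : a ≤ 2 * b) (z : E) :
    |gaussK N a z - gaussK N b z| ≤ gaussD N b z * (a - b) := by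
  have hderiv : ∀ τ ∈ Icc b a,
      HasDerivWithinAt (fun u => gaussK N u z)
        ((fun τ => gaussK N τ z * (‖z‖ ^ 2 / (4 * τ ^ 2) - N / (2 * τ))) τ) (Icc b a) τ :=
    fun τ hτ => (hasDerivAt_gaussK (lt_of_lt_of_le hb hτ.1) z).hasDerivWithinAt
  have hbound : ∀ τ ∈ Icc b a,
      ‖gaussK N τ z * (‖z‖ ^ 2 / (4 * τ ^ 2) - N / (2 * τ))‖ ≤ gaussD N b z := fun τ hτ => by
    rw [Real.norm_eq_abs]
    exact gaussD_spec hb hτ.1 (hτ.2.trans h2) z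
  have := (convex_Icc b a).norm_image_sub_le_of_norm_hasDerivWithin_le hderiv hbound
    (left_mem_Icc.2 hba) (right_mem_Icc.2 hba)
  rw [Real.norm_eq_abs, Real.norm_eq_abs, abs_of_nonneg (sub_nonneg.2 hba)] at this
  exact this

end helpers3

section conv
variable {N : ℕ}
local notation "E" => EuclideanSpace ℝ (Fin N)

lemma gaussD_nonneg {b : ℝ} (hb : 0 < b) (z : E) : 0 ≤ gaussD N b z := by
  unfold gaussD
  have h4 : (0:ℝ) < 4 * π * b := by positivity
  positivity

lemma continuous_gaussK_shift (t : ℝ) (x : E) :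
    Continuous (fun y : E => gaussK N t (x - y)) := by
  unfold gaussK
  apply continuous_const.mul
  apply Real.continuous_exp.comp
  apply Continuous.div_const
  exact ((continuous_const.sub continuous_id).norm.pow 2).neg

lemma integrable_conv {τ : ℝ} (hτ : 0 < τ) (x : E) {g : E → ℝ} {M : ℝ}
    (hg : AEStronglyMeasurable g (volume : Measure E)) (hgM : ∀ y, |g y| ≤ M) :
    Integrable (fun y => gaussK N τ (x - y) * g y) := by
  have gint : Integrable (fun y : E => gaussK N τ (x - y)) :=
    (integrable_gaussK hτ).comp_sub_left x
  apply Integrable.mono' (gint.const_mul M)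
    (((continuous_gaussK_shift τ x).aestronglyMeasurable).mul hg)
  filter_upwards with y
  simp only [Pi.mul_apply]
  rw [Real.norm_eq_abs, abs_mul, abs_of_nonneg (gaussK_nonneg hτ _), mul_comm M]
  exact mul_le_mul_of_nonneg_left (hgM y) (gaussK_nonneg hτ _)

lemma conv_abs_le {τ : ℝ} (hτ : 0 < τ) (x : E) {g : E → ℝ} {M : ℝ}
    (hg : AEStronglyMeasurable g (volume : Measure E)) (hgM : ∀ y, |g y| ≤ M) :
    |∫ y, gaussK N τ (x - y) * g y| ≤ M := by
  have gint : Integrable (fun y : E => gaussK N τ (x - y)) :=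
    (integrable_gaussK hτ).comp_sub_left x
  have h := norm_integral_le_of_norm_le (f := fun y => gaussK N τ (x - y) * g y)
    (gint.const_mul M) (Filter.Eventually.of_forall
    (fun y => by
      rw [Real.norm_eq_abs, abs_mul, abs_of_nonneg (gaussK_nonneg hτ _), mul_comm M]
      exact mul_le_mul_of_nonneg_left (hgM y) (gaussK_nonneg hτ _)))
  rw [Real.norm_eq_abs, integral_const_mul] at h
  calc |∫ y, gaussK N τ (x - y) * g y| ≤ M * ∫ y, gaussK N τ (x - y) := h
    _ = M := by rw [integral_sub_left_eq_self (gaussK N τ) volume x, integral_gaussK hτ, mul_one]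

lemma conv_sub_abs_le {b a : ℝ} (hb : 0 < b) (hba : b ≤ a) (h2 : a ≤ 2 * b) (x : E)
    {g : E → ℝ} {M : ℝ}
    (hg : AEStronglyMeasurable g (volume : Measure E)) (hgM : ∀ y, |g y| ≤ M) :
    |(∫ y, gaussK N a (x - y) * g y) - ∫ y, gaussK N b (x - y) * g y|
      ≤ M * (a - b) * ((4 ^ ((N:ℝ)/2) * ((N:ℝ)/2 + 4)) / b) := by
  have ha : 0 < a := lt_of_lt_of_le hb hba
  have hM : 0 ≤ M := le_trans (abs_nonneg _) (hgM 0)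
  have i1 := integrable_conv (N := N) ha x hg hgM
  have i2 := integrable_conv (N := N) hb x hg hgM
  have dint : Integrable (fun y : E => gaussD N b (x - y)) :=
    (integrable_gaussD hb).comp_sub_left x
  rw [← integral_sub i1 i2]
  have h := norm_integral_le_of_norm_le
    (f := fun y => gaussK N a (x - y) * g y - gaussK N b (x - y) * g y)
    (dint.const_mul (M * (a - b)))
    (Filter.Eventually.of_forall (fun y => by
      rw [Real.norm_eq_abs, ← sub_mul, abs_mul]
      calc |gaussK N a (x - y) - gaussK N b (x - y)| * |g y|
          ≤ (gaussD N b (x - y) * (a - b)) * M := by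
            apply mul_le_mul (gaussK_sub_abs_le hb hba h2 _) (hgM y) (abs_nonneg _)
            exact mul_nonneg (gaussD_nonneg hb _) (by linarith)
        _ = M * (a - b) * gaussD N b (x - y) := by ring))
  rw [Real.norm_eq_abs, integral_const_mul] at h
  calc |∫ y, (gaussK N a (x - y) * g y - gaussK N b (x - y) * g y)|
      ≤ M * (a - b) * ∫ y, gaussD N b (x - y) := h
    _ = M * (a - b) * ((4 ^ ((N:ℝ)/2) * ((N:ℝ)/2 + 4)) / b) := by
        rw [integral_sub_left_eq_self (gaussD N b) volume x, integral_gaussD hb]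
        congr 1
        field_simp

end conv

section main
variable {N : ℕ} {T : ℝ} {f : ℝ → EuclideanSpace ℝ (Fin N) → ℝ}
local notation "E" => EuclideanSpace ℝ (Fin N)

lemma continuousOn_f2 (hT : 0 < T)
    (hfu : ∀ t ∈ Icc 0 T, UniformContinuous (f t))
    (hfc : ∀ t ∈ Icc 0 T, ∀ ε > (0 : ℝ), ∃ η > (0 : ℝ), ∀ s ∈ Icc 0 T, |s - t| < η →
      ∀ x, |f s x - f t x| ≤ ε) :
    ContinuousOn (fun p : ℝ × E => f p.1 p.2) ((Icc 0 T) ×ˢ (univ : Set E)) := by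
  intro p hp
  obtain ⟨hp1, -⟩ := hp
  rw [Metric.continuousWithinAt_iff]
  intro ε hε
  obtain ⟨η, hη, hη'⟩ := hfc p.1 hp1 (ε/3) (by linarith)
  obtain ⟨δ, hδ, hδ'⟩ := Metric.uniformContinuous_iff.1 (hfu p.1 hp1) (ε/3) (by linarith)
  refine ⟨min η δ, lt_min hη hδ, fun {q} hq hdist => ?_⟩
  obtain ⟨hq1, -⟩ := hq
  have hd1 : dist q.1 p.1 < min η δ := lt_of_le_of_lt (by
    rw [Prod.dist_eq]; exact le_max_left _ _) hdist
  have hd2 : dist q.2 p.2 < min η δ := lt_of_le_of_lt (by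
    rw [Prod.dist_eq]; exact le_max_right _ _) hdist
  have t1 : dist (f q.1 q.2) (f p.1 q.2) ≤ ε/3 := by
    rw [Real.dist_eq]
    exact hη' q.1 hq1 (by rw [← Real.dist_eq]; exact hd1.trans_le (min_le_left _ _)) q.2
  have t2 : dist (f p.1 q.2) (f p.1 p.2) < ε/3 :=
    hδ' (hd2.trans_le (min_le_right _ _))
  have htri := dist_triangle (f q.1 q.2) (f p.1 q.2) (f p.1 p.2)
  linarith

lemma aesm_Phi (hT : 0 < T)
    (hfu : ∀ t ∈ Icc 0 T, UniformContinuous (f t))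
    (hfc : ∀ t ∈ Icc 0 T, ∀ ε > (0 : ℝ), ∃ η > (0 : ℝ), ∀ s ∈ Icc 0 T, |s - t| < η →
      ∀ x, |f s x - f t x| ≤ ε)
    {t : ℝ} (ht : 0 < t) (htT : t ≤ T) (x : E) :
    AEStronglyMeasurable (fun r => ∫ y, gaussK N (t - r) (x - y) * f r y)
      ((volume : Measure ℝ).restrict (Ioo 0 t)) := by
  have hsub : (Ioo 0 t ×ˢ (univ : Set E)) ⊆ (Icc 0 T ×ˢ (univ : Set E)) :=
    prod_mono (fun r hr => ⟨hr.1.le, hr.2.le.trans htT⟩) subset_rfl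
  have hKcont : ContinuousOn (fun p : ℝ × E => gaussK N (t - p.1) (x - p.2))
      (Ioo 0 t ×ˢ (univ : Set E)) := by
    have hbase : Continuous (fun p : ℝ × E => 4 * π * (t - p.1)) := by
      fun_prop
    have hne : ∀ p : ℝ × E, p ∈ Ioo 0 t ×ˢ (univ : Set E) → 4 * π * (t - p.1) ≠ 0 := by
      intro p hp
      have h1 : p.1 < t := hp.1.2
      have hπ := pi_pos
      have : (0:ℝ) < 4 * π * (t - p.1) := by nlinarith
      exact this.ne'
    unfold gaussK
    apply ContinuousOn.mul
    · exact ContinuousOn.rpow_const hbase.continuousOn (fun p hp => Or.inl (hne p hp))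
    · apply Real.continuous_exp.comp_continuousOn
      apply ContinuousOn.div
      · fun_prop
      · fun_prop
      · intro p hp
        have h1 : p.1 < t := hp.1.2
        have : (0:ℝ) < 4 * (t - p.1) := by nlinarith
        exact this.ne'
  have hfcont := (continuousOn_f2 hT hfu hfc).mono hsub
  have hcont := hKcont.mul hfcont
  have hmeas : MeasurableSet (Ioo (0:ℝ) t ×ˢ (univ : Set E)) :=
    measurableSet_Ioo.prod MeasurableSet.univ
  have haesm := hcont.aestronglyMeasurable (μ := (volume : Measure (ℝ × E))) hmeas
  have h2 : ((volume : Measure (ℝ × E)).restrict (Ioo 0 t ×ˢ (univ : Set E)))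
      = ((volume : Measure ℝ).restrict (Ioo 0 t)).prod (volume : Measure E) := by
    rw [Measure.volume_eq_prod, ← Measure.prod_restrict, Measure.restrict_univ]
  rw [h2] at haesm
  exact haesm.integral_prod_right'

lemma intervalIntegrable_Phi (hN : 1 ≤ N) (hT : 0 < T) {M : ℝ}
    (hM : ∀ r ∈ Icc 0 T, ∀ y, |f r y| ≤ M)
    (hfu : ∀ t ∈ Icc 0 T, UniformContinuous (f t))
    (hfc : ∀ t ∈ Icc 0 T, ∀ ε > (0 : ℝ), ∃ η > (0 : ℝ), ∀ s ∈ Icc 0 T, |s - t| < η →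
      ∀ x, |f s x - f t x| ≤ ε)
    {t : ℝ} (ht : 0 ≤ t) (htT : t ≤ T) (x : E) :
    IntervalIntegrable (fun r => ∫ y, gaussK N (t - r) (x - y) * f r y) volume 0 t := by
  have hM0 : 0 ≤ M := le_trans (abs_nonneg _) (hM 0 ⟨le_refl _, hT.le⟩ 0)
  rcases eq_or_lt_of_le ht with rfl | ht'
  · exact IntervalIntegrable.refl
  rw [intervalIntegrable_iff_integrableOn_Ioc_of_le ht]
  have haesm := aesm_Phi hT hfu hfc ht' htT x
  rw [Measure.restrict_congr_set Ioo_ae_eq_Ioc] at haesm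
  apply Integrable.mono' (g := fun _ => M)
    (integrableOn_const measure_Ioc_lt_top.ne) haesm
  rw [ae_restrict_iff' measurableSet_Ioc]
  apply Filter.Eventually.of_forall
  intro r hr
  rw [Real.norm_eq_abs]
  rcases eq_or_lt_of_le hr.2 with rfl | hrt
  · have hzero : ∀ y : E, gaussK N (r - r) (x - y) * f r y = 0 := by
      intro y
      have hNe : (-(N:ℝ)/2) ≠ 0 := by
        have : (0:ℝ) < N := by exact_mod_cast hN
        have : -(N:ℝ)/2 < 0 := by linarith
        linarith
      rw [sub_self, gaussK, mul_zero, Real.zero_rpow hNe, zero_mul, zero_mul]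
    simp only [hzero, integral_zero, abs_zero]
    exact hM0
  · exact conv_abs_le (by linarith) x
      ((hfu r ⟨hr.1.le, (hr.2.trans htT)⟩).continuous.aestronglyMeasurable)
      (hM r ⟨hr.1.le, hr.2.trans htT⟩)

end main

section main2
variable {N : ℕ} {T : ℝ} {f : ℝ → EuclideanSpace ℝ (Fin N) → ℝ}
local notation "E" => EuclideanSpace ℝ (Fin N)

lemma abs_Phi_le (hN : 1 ≤ N) {M : ℝ}
    (hM : ∀ r ∈ Icc 0 T, ∀ y, |f r y| ≤ M)
    (hfu : ∀ t ∈ Icc 0 T, UniformContinuous (f t))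
    {t r : ℝ} (hr0 : 0 < r) (hrt : r ≤ t) (hrT : r ≤ T) (x : E) :
    |∫ y, gaussK N (t - r) (x - y) * f r y| ≤ M := by
  have hrIcc : r ∈ Icc (0:ℝ) T := ⟨hr0.le, hrT⟩
  have hM0 : 0 ≤ M := le_trans (abs_nonneg _) (hM r hrIcc 0)
  rcases eq_or_lt_of_le hrt with rfl | hlt
  · have hzero : ∀ y : E, gaussK N (r - r) (x - y) * f r y = 0 := by
      intro y
      have hNe : (-(N:ℝ)/2) ≠ 0 := by
        have h1 : (0:ℝ) < N := by exact_mod_cast hN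
        have h2 : -(N:ℝ)/2 < 0 := by linarith
        linarith
      rw [sub_self, gaussK, mul_zero, Real.zero_rpow hNe, zero_mul, zero_mul]
    simp only [hzero, integral_zero, abs_zero]
    exact hM0
  · exact conv_abs_le (by linarith) x
      ((hfu r hrIcc).continuous.aestronglyMeasurable) (hM r hrIcc)

lemma key_estimate (hN : 1 ≤ N) (hT : 0 < T) {M : ℝ}
    (hM : ∀ r ∈ Icc 0 T, ∀ y, |f r y| ≤ M)
    (hfu : ∀ t ∈ Icc 0 T, UniformContinuous (f t))
    (hfc : ∀ t ∈ Icc 0 T, ∀ ε > (0 : ℝ), ∃ η > (0 : ℝ), ∀ s ∈ Icc 0 T, |s - t| < η →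
      ∀ x, |f s x - f t x| ≤ ε)
    {γ : ℝ} (hγ : γ ∈ Ioo (0:ℝ) 1) {s t : ℝ} (hs : s ∈ Icc 0 T) (ht : t ∈ Icc 0 T)
    (hst : s < t) (x : E) :
    |duhamel N f t x - duhamel N f s x|
      ≤ (M * T ^ (1 - γ) + (2*M + M * (4 ^ ((N:ℝ)/2) * ((N:ℝ)/2 + 4))) * T ^ (1-γ) / (1-γ))
          * (t - s) ^ γ := by
  have hM0 : 0 ≤ M := le_trans (abs_nonneg _) (hM 0 ⟨le_refl _, hT.le⟩ 0)
  set CN : ℝ := 4 ^ ((N:ℝ)/2) * ((N:ℝ)/2 + 4) with hCN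
  have hCN0 : 0 ≤ CN := by positivity
  set KK : ℝ := 2*M + M * CN with hKK
  have hKK0 : 0 ≤ KK := by positivity
  have h0s : 0 ≤ s := hs.1
  have h0t : 0 < t := lt_of_le_of_lt h0s hst
  have hh : 0 < t - s := by linarith
  have hγ1 : 0 < 1 - γ := by linarith [hγ.2]
  set Φt := fun r => ∫ y, gaussK N (t - r) (x - y) * f r y with hΦt
  set Φs := fun r => ∫ y, gaussK N (s - r) (x - y) * f r y with hΦs
  have iIt : IntervalIntegrable Φt volume 0 t :=
    intervalIntegrable_Phi hN hT hM hfu hfc h0t.le ht.2 x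
  have iIt0s : IntervalIntegrable Φt volume 0 s := iIt.mono_set (by
    rw [uIcc_of_le h0s, uIcc_of_le h0t.le]; exact Icc_subset_Icc le_rfl hst.le)
  have iItst : IntervalIntegrable Φt volume s t := iIt.mono_set (by
    rw [uIcc_of_le hst.le, uIcc_of_le h0t.le]; exact Icc_subset_Icc h0s le_rfl)
  have iIs : IntervalIntegrable Φs volume 0 s :=
    intervalIntegrable_Phi hN hT hM hfu hfc h0s hs.2 x
  have hdt : duhamel N f t x = ∫ r in (0:ℝ)..t, Φt r := by
    rw [intervalIntegral.integral_of_le h0t.le, duhamel]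
    exact setIntegral_congr_set Ioo_ae_eq_Ioc
  have hds : duhamel N f s x = ∫ r in (0:ℝ)..s, Φs r := by
    rw [intervalIntegral.integral_of_le h0s, duhamel]
    exact setIntegral_congr_set Ioo_ae_eq_Ioc
  have hdecomp : duhamel N f t x - duhamel N f s x
      = (∫ r in (0:ℝ)..s, (Φt r - Φs r)) + ∫ r in s..t, Φt r := by
    rw [hdt, hds, ← intervalIntegral.integral_add_adjacent_intervals iIt0s iItst,
      intervalIntegral.integral_sub iIt0s iIs]
    ring
  -- bound on the tail piece
  have boundA : |∫ r in s..t, Φt r| ≤ M * (t - s) := by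
    have h := intervalIntegral.norm_integral_le_of_norm_le_const (C := M) (f := Φt)
      (a := s) (b := t) (fun r hr => by
        rw [uIoc_of_le hst.le] at hr
        rw [Real.norm_eq_abs]
        exact abs_Phi_le hN hM hfu (lt_of_le_of_lt h0s hr.1) hr.2 (hr.2.trans ht.2) x)
    rw [Real.norm_eq_abs, abs_of_nonneg (by linarith : (0:ℝ) ≤ t - s)] at h
    exact h
  -- bound on the main piece
  set g : ℝ → ℝ := fun r => (KK * (t - s) ^ γ) * (s - r) ^ (-γ) with hg
  have hgint : IntervalIntegrable g volume 0 s := by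
    have h1 : IntervalIntegrable (fun u : ℝ => u ^ (-γ)) volume 0 s :=
      intervalIntegral.intervalIntegrable_rpow' (by linarith [hγ.2])
    have h2 := (h1.comp_sub_left s).symm
    simp only [sub_zero, sub_self] at h2
    exact h2.const_mul _
  have hbd : ∀ᵐ r ∂(volume : Measure ℝ).restrict (Set.uIoc 0 s), ‖Φt r - Φs r‖ ≤ g r := by
    rw [uIoc_of_le h0s]
    have hne : ∀ᵐ (r : ℝ) ∂(volume : Measure ℝ), r ≠ s := by
      rw [ae_iff]
      have : {r : ℝ | ¬ r ≠ s} = {s} := by ext r; simp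
      rw [this]
      exact measure_singleton s
    filter_upwards [ae_restrict_mem measurableSet_Ioc, ae_restrict_of_ae hne] with r hr hrs
    have hrIoo : r ∈ Ioo 0 s := ⟨hr.1, lt_of_le_of_ne hr.2 hrs⟩
    have hb : 0 < s - r := by linarith [hrIoo.2]
    have hrIcc : r ∈ Icc (0:ℝ) T := ⟨hrIoo.1.le, by linarith [hs.2, hrIoo.2]⟩
    have hgmeas := (hfu r hrIcc).continuous.aestronglyMeasurable (μ := (volume : Measure E))
    have hgM := hM r hrIcc
    have hρpos : 0 < (t - s) / (s - r) := by positivity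
    have hρ : ((t-s)/(s-r)) ^ γ = (t - s) ^ γ * (s - r) ^ (-γ) := by
      rw [Real.div_rpow hh.le hb.le, Real.rpow_neg hb.le, div_eq_mul_inv]
    rw [Real.norm_eq_abs]
    rcases le_or_gt (s - r) (t - s) with hcase | hcase
    · -- short-time: crude bound
      have h1 : |Φt r - Φs r| ≤ 2 * M := by
        have a1 := abs_Phi_le hN hM hfu hrIoo.1 (by linarith [hrIoo.2] : r ≤ t) hrIcc.2 x
        have a2 := abs_Phi_le hN hM hfu hrIoo.1 hrIoo.2.le hrIcc.2 x
        calc |Φt r - Φs r| ≤ |Φt r| + |Φs r| := abs_sub _ _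
          _ ≤ 2 * M := by rw [hΦt, hΦs]; simp only []; linarith
      have hρ1 : (1:ℝ) ≤ ((t-s)/(s-r)) ^ γ :=
        Real.one_le_rpow (by rw [le_div_iff₀ hb]; linarith) hγ.1.le
      calc |Φt r - Φs r| ≤ 2 * M := h1
        _ ≤ 2 * M * ((t-s)/(s-r)) ^ γ := by nlinarith
        _ ≤ KK * ((t-s)/(s-r)) ^ γ := by
            apply mul_le_mul_of_nonneg_right _ (le_of_lt (Real.rpow_pos_of_pos hρpos γ))
            rw [hKK]; nlinarith
        _ = g r := by rw [hg, hρ]; ring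
    · -- kernel difference bound
      have hab : s - r ≤ t - r := by linarith
      have h2b : t - r ≤ 2 * (s - r) := by linarith
      have h2 := conv_sub_abs_le hb hab h2b x hgmeas hgM
      have hsub : (t - r) - (s - r) = t - s := by ring
      rw [hsub] at h2
      have hρle : (t-s)/(s-r) ≤ ((t-s)/(s-r)) ^ γ := by
        have hle1 : (t-s)/(s-r) ≤ 1 := by
          rw [div_le_one hb]; linarith
        have := Real.rpow_le_rpow_of_exponent_ge hρpos hle1 hγ.2.le
        rwa [Real.rpow_one] at this
      calc |Φt r - Φs r| ≤ M * (t - s) * (CN / (s - r)) := h2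
        _ = (M * CN) * ((t-s)/(s-r)) := by ring
        _ ≤ (M * CN) * ((t-s)/(s-r)) ^ γ := by
            apply mul_le_mul_of_nonneg_left hρle (by positivity)
        _ ≤ KK * ((t-s)/(s-r)) ^ γ := by
            apply mul_le_mul_of_nonneg_right _ (le_of_lt (Real.rpow_pos_of_pos hρpos γ))
            rw [hKK]; nlinarith
        _ = g r := by rw [hg, hρ]; ring
  have hgval : |∫ r in (0:ℝ)..s, g r| = KK * (t-s)^γ * (s ^ (1-γ) / (1-γ)) := by
    rw [hg]
    rw [intervalIntegral.integral_const_mul]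
    have h1 : (∫ r in (0:ℝ)..s, (s - r) ^ (-γ)) = ∫ u in (0:ℝ)..s, u ^ (-γ) := by
      have := intervalIntegral.integral_comp_sub_left (a := (0:ℝ)) (b := s)
        (fun u : ℝ => u ^ (-γ)) s
      simpa using this
    rw [h1, integral_rpow (Or.inl (by linarith [hγ.2]))]
    rw [Real.zero_rpow (by linarith : -γ + 1 ≠ 0), sub_zero]
    rw [abs_of_nonneg (mul_nonneg (mul_nonneg hKK0 (Real.rpow_nonneg hh.le _))
      (div_nonneg (Real.rpow_nonneg h0s _) (by linarith)))]
    rw [show -γ + 1 = 1 - γ by ring]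
  have boundB : |∫ r in (0:ℝ)..s, (Φt r - Φs r)| ≤ KK * (t-s)^γ * (s ^ (1-γ) / (1-γ)) := by
    have h := intervalIntegral.norm_integral_le_abs_of_norm_le hbd hgint
    rw [Real.norm_eq_abs, hgval] at h
    exact h
  -- put it together
  have e1 : t - s ≤ T ^ (1-γ) * (t-s)^γ := by
    have heq : t - s = (t-s)^γ * (t-s)^(1-γ) := by
      rw [← Real.rpow_add hh, show γ + (1-γ) = 1 by ring, Real.rpow_one]
    have hle : (t-s)^(1-γ) ≤ T^(1-γ) :=
      Real.rpow_le_rpow hh.le (by linarith [ht.2, hs.1]) hγ1.le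
    calc t - s = (t-s)^γ * (t-s)^(1-γ) := heq
      _ ≤ (t-s)^γ * T^(1-γ) := by
          apply mul_le_mul_of_nonneg_left hle (Real.rpow_nonneg hh.le γ)
      _ = T^(1-γ) * (t-s)^γ := by ring
  have e2 : s ^ (1-γ) ≤ T ^ (1-γ) := Real.rpow_le_rpow h0s hs.2 hγ1.le
  calc |duhamel N f t x - duhamel N f s x|
      ≤ |∫ r in (0:ℝ)..s, (Φt r - Φs r)| + |∫ r in s..t, Φt r| := by
        rw [hdecomp]; exact abs_add_le _ _
    _ ≤ KK * (t-s)^γ * (s ^ (1-γ) / (1-γ)) + M * (t - s) := by linarith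
    _ ≤ KK * (t-s)^γ * (T ^ (1-γ) / (1-γ)) + M * (T^(1-γ) * (t-s)^γ) := by
        apply add_le_add
        · gcongr
        · nlinarith
    _ = (M * T ^ (1 - γ) + KK * T ^ (1-γ) / (1-γ)) * (t - s) ^ γ := by ring
end main2

/-- Lemma C.2 on `ℝ^N`.  For `f ∈ C([0,T], C_{b,u}(ℝ^N))`, the map
`v(t) = ∫₀ᵗ K(t-s,·) ⋆ f(s) ds` is `γ`-Hölder continuous `[0,T] → C_{b,u}(ℝ^N)` for every
`γ ∈ (0,1)`. -/
theorem stmt14 (N : ℕ) (hN : 1 ≤ N) (T : ℝ) (hT : 0 < T)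
    (f : ℝ → EuclideanSpace ℝ (Fin N) → ℝ)
    -- `f(t) ∈ C_{b,u}(ℝ^N)` for each `t ∈ [0,T]`
    (hfb : ∃ C, ∀ t ∈ Icc 0 T, ∀ x, |f t x| ≤ C)
    (hfu : ∀ t ∈ Icc 0 T, UniformContinuous (f t))
    -- `t ↦ f(t)` is continuous `[0,T] → C_{b,u}(ℝ^N)` in the supremum norm
    (hfc : ∀ t ∈ Icc 0 T, ∀ ε > (0 : ℝ), ∃ η > (0 : ℝ), ∀ s ∈ Icc 0 T, |s - t| < η →
      ∀ x, |f s x - f t x| ≤ ε)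
    (γ : ℝ) (hγ : γ ∈ Ioo (0 : ℝ) 1) :
    ∃ C : ℝ, ∀ s ∈ Icc 0 T, ∀ t ∈ Icc 0 T, ∀ x,
      |duhamel N f t x - duhamel N f s x| ≤ C * |t - s| ^ γ := by
  obtain ⟨M, hM⟩ := hfb
  have hM0 : 0 ≤ M := le_trans (abs_nonneg _) (hM 0 ⟨le_refl _, hT.le⟩ 0)
  have hγ1 : 0 < 1 - γ := by linarith [hγ.2]
  set CN : ℝ := 4 ^ ((N:ℝ)/2) * ((N:ℝ)/2 + 4) with hCN
  have hCN0 : 0 ≤ CN := by positivity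
  refine ⟨M * T ^ (1 - γ) + (2*M + M * CN) * T ^ (1-γ) / (1-γ), ?_⟩
  intro s hs t ht x
  rcases lt_trichotomy s t with h | h | h
  · rw [abs_of_nonneg (by linarith : (0:ℝ) ≤ t - s)]
    exact key_estimate hN hT hM hfu hfc hγ hs ht h x
  · subst h
    simp [sub_self, Real.zero_rpow hγ.1.ne']
  · rw [abs_sub_comm (duhamel N f t x), abs_sub_comm t s,
      abs_of_nonneg (by linarith : (0:ℝ) ≤ s - t)]
    exact key_estimate hN hT hM hfu hfc hγ ht hs h x
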